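/- If two functions f, g : ω → Ord are both exact upper bounds (with respect to eventual domination <*) of the same <*-increasing sequence ⟨f_α : α < δ⟩, where δ has uncountable cofinality, then f(n) = g(n) for all but finitely many n. -/
import Mathlib


/-- `f <* g` : eventual (mod finite) domination. -/
def evDom (f g : ℕ → Ordinal) : Prop := ∀ᶠ n in Filter.atTop, f n < g n

lemma eub_key (δ : Ordinal) (fseq : Ordinal → ℕ → Ordinal) (f g : ℕ → Ordinal)
    (hδ0 : 0 < δ)
    (hpos : ∀ α < δ, ∀ n, 0 < fseq α n)
    (hf₁ : ∀ α < δ, evDom (fseq α) f)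
    (hg₁ : ∀ α < δ, evDom (fseq α) g)
    (hg₂ : ∀ k : ℕ → Ordinal, evDom k g → ∃ α < δ, evDom k (fseq α)) :
    {n | f n < g n}.Finite := by
  by_contra h
  replace h : {n | f n < g n}.Infinite := h
  set k : ℕ → Ordinal := fun n => if f n < g n then f n else 0 with hk
  have hkg : evDom k g := by
    refine (hg₁ 0 hδ0).mono fun n hn => ?_
    by_cases hc : f n < g n
    · simp only [hk, if_pos hc]; exact hc
    · simpa [hk, hc] using (hpos 0 hδ0 n).trans hn
  obtain ⟨α, hα, hkα⟩ := hg₂ k hkg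
  have hcomb : ∀ᶠ n in Filter.atTop, k n < fseq α n ∧ fseq α n < f n :=
    hkα.and (hf₁ α hα)
  rw [Filter.eventually_atTop] at hcomb
  obtain ⟨N, hN⟩ := hcomb
  obtain ⟨n, hnA, hnN⟩ := h.exists_gt N
  obtain ⟨h1, h2⟩ := hN n hnN.le
  have hnA' : f n < g n := hnA
  rw [show k n = f n from if_pos hnA'] at h1
  exact absurd (h1.trans h2) (lt_irrefl _)

/-- two exact upper bounds of the same <*-increasing sequence of length of
uncountable cofinality agree on a cofinite set. -/
theorem eub_unique (δ : Ordinal) (fseq : Ordinal → ℕ → Ordinal) (f g : ℕ → Ordinal)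
    (hδ : Cardinal.aleph0 < δ.cof)
    (hpos : ∀ α < δ, ∀ n, 0 < fseq α n)
    (hinc : ∀ α β, α < β → β < δ → evDom (fseq α) (fseq β))
    (hf₁ : ∀ α < δ, evDom (fseq α) f)
    (hf₂ : ∀ k : ℕ → Ordinal, evDom k f → ∃ α < δ, evDom k (fseq α))
    (hg₁ : ∀ α < δ, evDom (fseq α) g)
    (hg₂ : ∀ k : ℕ → Ordinal, evDom k g → ∃ α < δ, evDom k (fseq α)) :
    ∀ᶠ n in Filter.atTop, f n = g n := by
  have hδ0 : 0 < δ := by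
    rcases eq_or_ne δ 0 with rfl | h
    · simp [Ordinal.cof_zero] at hδ
    · exact pos_iff_ne_zero.mpr h
  have hA := eub_key δ fseq f g hδ0 hpos hf₁ hg₁ hg₂
  have hB := eub_key δ fseq g f hδ0 hpos hg₁ hf₁ hf₂
  have h1 : ∀ᶠ n in Filter.atTop, ¬ (f n < g n) := by
    rw [← Nat.cofinite_eq_atTop, Filter.eventually_cofinite]
    simpa using hA
  have h2 : ∀ᶠ n in Filter.atTop, ¬ (g n < f n) := by
    rw [← Nat.cofinite_eq_atTop, Filter.eventually_cofinite]
    simpa using hB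
  filter_upwards [h1, h2] with n hn1 hn2
  exact le_antisymm (not_lt.mp hn2) (not_lt.mp hn1)
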